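/- For all n ≥ 2, Σ_{k=1}^{2^{n-1}} |(2cos((2k-1)π/2^{n+1}) + 1)/(2cos((2k-1)π/2^{n+1}) - 1)|^{2/3} < 2^{n-1}·33. -/

import Mathlib

open Real Filter Finset

lemma sum_rpow_le (N : ℕ) :
    ∑ j ∈ Finset.range N, ((j : ℝ) + 1) ^ (-(2:ℝ)/3) ≤ 3 * (N : ℝ) ^ ((1:ℝ)/3) := by
  induction N with
  | zero => simp
  | succ m ih =>
    rw [Finset.sum_range_succ]
    have hm : (0:ℝ) ≤ m := Nat.cast_nonneg m
    have hm1 : (0:ℝ) < (m:ℝ) + 1 := by positivity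
    have key : ((m:ℝ) + 1) ^ (-(2:ℝ)/3) ≤ 3 * ((m:ℝ)+1) ^ ((1:ℝ)/3) - 3 * (m:ℝ) ^ ((1:ℝ)/3) := by
      have amgm : ((m:ℝ)+1) ^ ((2:ℝ)/3) * (m:ℝ) ^ ((1:ℝ)/3) ≤ (2/3) * ((m:ℝ)+1) + (1/3) * m :=
        Real.geom_mean_le_arith_mean2_weighted (by norm_num) (by norm_num) (by positivity) hm
          (by norm_num)
      have h23 : ((m:ℝ)+1) ^ ((2:ℝ)/3) * ((m:ℝ)+1) ^ ((1:ℝ)/3) = (m:ℝ)+1 := by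
        rw [← Real.rpow_add hm1]; norm_num
      have hpos : (0:ℝ) < ((m:ℝ)+1) ^ ((2:ℝ)/3) := Real.rpow_pos_of_pos hm1 _
      have hneg : ((m:ℝ) + 1) ^ (-(2:ℝ)/3) = (((m:ℝ)+1) ^ ((2:ℝ)/3))⁻¹ := by
        rw [← Real.rpow_neg hm1.le]; norm_num
      rw [hneg, inv_le_iff_one_le_mul₀ hpos]
      nlinarith [hpos]
    push_cast
    linarith

lemma cos_lower {x : ℝ} (h0 : 0 ≤ x) (h2 : x ≤ π / 2) :
    2 / π * |x - π/3| ≤ |2 * Real.cos x - 1| := by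
  have hπ : (0:ℝ) < π := Real.pi_pos
  have hcos : 2 * Real.cos x - 1 = -(4 * (Real.sin ((x + π/3)/2) * Real.sin ((x - π/3)/2))) := by
    have := Real.cos_sub_cos x (π/3)
    rw [Real.cos_pi_div_three] at this
    linarith
  have h1 : (1/2 : ℝ) ≤ Real.sin ((x + π/3)/2) := by
    calc (1/2:ℝ) = Real.sin (π/6) := by rw [Real.sin_pi_div_six]
    _ ≤ Real.sin ((x + π/3)/2) :=
        Real.sin_le_sin_of_le_of_le_pi_div_two (by linarith) (by linarith) (by linarith)
  have h2' : |x - π/3| / π ≤ |Real.sin ((x - π/3)/2)| := by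
    have habs : |(x - π/3)/2| ≤ π/2 := by
      rw [abs_le]; constructor <;> nlinarith
    have := Real.mul_le_sin (abs_nonneg ((x - π/3)/2)) habs
    calc |x - π/3| / π = 2/π * |(x - π/3)/2| := by
          rw [abs_div]; rw [abs_of_nonneg (by norm_num : (0:ℝ) ≤ 2)]; ring
    _ ≤ Real.sin |(x - π/3)/2| := this
    _ ≤ |Real.sin ((x - π/3)/2)| := by
          rcases abs_choice ((x - π/3)/2) with h | h
          · rw [h]; exact le_abs_self _
          · rw [h, Real.sin_neg]; exact neg_le_abs _
  calc 2/π * |x - π/3| = 4 * ((1/2) * (|x - π/3| / π)) := by ring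
  _ ≤ 4 * (Real.sin ((x + π/3)/2) * |Real.sin ((x - π/3)/2)|) := by
      apply mul_le_mul_of_nonneg_left _ (by norm_num)
      apply mul_le_mul h1 h2' (by positivity) (by linarith)
  _ = |2 * Real.cos x - 1| := by
      rw [hcos, abs_neg, abs_mul, abs_mul, abs_of_nonneg (by norm_num : (0:ℝ) ≤ 4),
        abs_of_nonneg (by linarith : (0:ℝ) ≤ Real.sin ((x + π/3)/2))]

lemma pow2_mod6 (m : ℕ) : 2 ^ (m + 1) % 6 = 2 ∨ 2 ^ (m + 1) % 6 = 4 := by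
  induction m with
  | zero => left; rfl
  | succ p ih =>
    have : 2 ^ (p + 2) = 2 * 2 ^ (p + 1) := by ring
    rw [this, Nat.mul_mod]
    omega

lemma rpow_18 : (18:ℝ) ^ ((2:ℝ)/3) ≤ 7 := by
  have h : ((18:ℝ) ^ ((2:ℝ)/3)) ^ (3:ℕ) ≤ 7 ^ (3:ℕ) := by
    rw [← Real.rpow_natCast ((18:ℝ) ^ ((2:ℝ)/3)) 3, ← Real.rpow_mul (by norm_num)]
    norm_num
  exact le_of_pow_le_pow_left₀ (by norm_num) (by norm_num) h

lemma rpow_972 : (18:ℝ) ^ ((2:ℝ)/3) * (3:ℝ) ^ ((1:ℝ)/3) ≤ 10 := by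
  have h : ((18:ℝ) ^ ((2:ℝ)/3) * (3:ℝ) ^ ((1:ℝ)/3)) ^ (3:ℕ) ≤ 10 ^ (3:ℕ) := by
    rw [mul_pow, ← Real.rpow_natCast ((18:ℝ) ^ ((2:ℝ)/3)) 3,
      ← Real.rpow_natCast ((3:ℝ) ^ ((1:ℝ)/3)) 3,
      ← Real.rpow_mul (by norm_num : (0:ℝ) ≤ 18),
      ← Real.rpow_mul (by norm_num : (0:ℝ) ≤ 3)]
    norm_num
  exact le_of_pow_le_pow_left₀ (by norm_num) (by positivity) h

noncomputable def X (n : ℕ) : ℝ := 2 * Real.cos (Real.pi / 2 ^ (n + 1))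

theorem stmt16 (n : ℕ) (hn : 2 ≤ n) :
    ∑ k ∈ Finset.range (2 ^ (n - 1)),
      |(2 * Real.cos ((2 * k + 1) * Real.pi / 2 ^ (n + 1)) + 1) /
        (2 * Real.cos ((2 * k + 1) * Real.pi / 2 ^ (n + 1)) - 1)| ^ ((2 : ℝ) / 3) <
      2 ^ (n - 1) * 33 := by
  have hπ : (0:ℝ) < π := Real.pi_pos
  set N : ℕ := 2 ^ (n - 1) with hNdef
  set M : ℕ := 2 ^ (n + 1) with hMdef
  have hMN : M = 4 * N := by
    rw [hMdef, hNdef, show n + 1 = (n - 1) + 2 by omega, pow_add]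
    ring
  have hN1 : 1 ≤ N := Nat.one_le_two_pow
  have hr : M % 6 = 2 ∨ M % 6 = 4 := pow2_mod6 n
  set q : ℕ := M / 6 with hqdef
  have hMq : M = 6 * q + M % 6 := (Nat.div_add_mod M 6).symm ▸ by omega
  have hqN : q + 1 ≤ N := by omega
  -- the integer distances
  set d : ℕ → ℕ := fun k => ((6*k+3 : ℤ) - M).natAbs with hddef
  have hdq : d q = 1 := by simp only [hddef]; omega
  have hd1 : ∀ k, 1 ≤ d k := by intro k; simp only [hddef]; omega
  have hdk : ∀ k, k ≠ q → 3 * ((k:ℤ) - q).natAbs ≤ d k := by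
    intro k hk; simp only [hddef]
    have : ¬ ((k:ℤ) = q) := by exact_mod_cast fun h => hk (by exact_mod_cast h)
    omega
  -- real casts
  have hMR : ((M:ℝ)) = 2 ^ (n + 1) := by rw [hMdef]; push_cast; ring
  have hNR0 : (0:ℝ) < N := by exact_mod_cast hN1
  have hMR0 : (0:ℝ) < M := by rw [hMN]; positivity
  -- per-term bound
  set f : ℕ → ℝ := fun j => ((3:ℝ) * ((j:ℝ)+1)) ^ (-(2:ℝ)/3) with hfdef
  set w : ℕ → ℝ := fun k => if k = q then (1:ℝ)
    else ((3:ℝ) * ((((k:ℤ) - q).natAbs : ℕ) : ℝ)) ^ (-(2:ℝ)/3) with hwdef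
  set C : ℝ := ((18:ℝ) * N) ^ ((2:ℝ)/3) with hCdef
  have hC0 : 0 ≤ C := Real.rpow_nonneg (by positivity) _
  have hterm : ∀ k ∈ Finset.range N,
      |(2 * Real.cos ((2 * k + 1) * π / 2 ^ (n + 1)) + 1) /
        (2 * Real.cos ((2 * k + 1) * π / 2 ^ (n + 1)) - 1)| ^ ((2 : ℝ) / 3) ≤ C * w k := by
    intro k hk
    rw [Finset.mem_range] at hk
    set x : ℝ := (2 * k + 1) * π / 2 ^ (n + 1) with hxdef
    have hxM : x = (2 * (k:ℝ) + 1) * π / M := by rw [hxdef, hMR]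
    have hx0 : 0 ≤ x := by rw [hxM]; positivity
    have hx2 : x ≤ π / 2 := by
      rw [hxM, hMN, div_le_div_iff₀ (by positivity) (by norm_num)]
      push_cast
      have : (k:ℝ) ≤ (N:ℝ) - 1 := by
        have : (k:ℝ) + 1 ≤ N := by exact_mod_cast hk
        linarith
      nlinarith
    have hde : ((d k : ℝ)) = |6*(k:ℝ) + 3 - M| := by
      rw [hddef]
      rw [Nat.cast_natAbs]
      push_cast
      ring_nf
    have hxe : |x - π/3| = π * (d k) / (3 * M) := by
      have : x - π/3 = π * (6*(k:ℝ) + 3 - M) / (3 * M) := by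
        rw [hxM]; field_simp; ring
      rw [this, abs_div, abs_mul, abs_of_nonneg hπ.le,
        abs_of_nonneg (by positivity : (0:ℝ) ≤ 3 * (M:ℝ)), ← hde]
    have hlow : 2 * (d k) / (3 * M) ≤ |2 * Real.cos x - 1| := by
      have := cos_lower hx0 hx2
      rw [hxe] at this
      calc 2 * (d k:ℝ) / (3 * M) = 2/π * (π * (d k) / (3 * M)) := by field_simp
      _ ≤ _ := this
    have hlow0 : (0:ℝ) < 2 * (d k) / (3 * M) := by
      have : (1:ℝ) ≤ (d k : ℝ) := by exact_mod_cast hd1 k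
      positivity
    have hup : |2 * Real.cos x + 1| ≤ 3 := by
      have h1 := Real.cos_le_one x
      have h2 := Real.neg_one_le_cos x
      rw [abs_le]; constructor <;> linarith
    have hratio : |(2 * Real.cos x + 1) / (2 * Real.cos x - 1)| ≤ 18 * N / d k := by
      rw [abs_div]
      have hd0 : (0:ℝ) < |2 * Real.cos x - 1| := lt_of_lt_of_le hlow0 hlow
      rw [div_le_div_iff₀ hd0 (by exact_mod_cast Nat.lt_of_lt_of_le Nat.zero_lt_one (hd1 k))]
      calc |2 * Real.cos x + 1| * d k ≤ 3 * d k := by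
            apply mul_le_mul_of_nonneg_right hup (by positivity)
      _ ≤ 18 * N * |2 * Real.cos x - 1| := by
            have h3 : 18 * (N:ℝ) * (2 * (d k) / (3 * M)) = 3 * d k := by
              rw [hMN]; push_cast; field_simp; ring
            calc (3:ℝ) * d k = 18 * N * (2 * (d k) / (3 * M)) := h3.symm
            _ ≤ 18 * (N:ℝ) * |2 * Real.cos x - 1| := by
                apply mul_le_mul_of_nonneg_left hlow (by positivity)
    have hstep : |(2 * Real.cos x + 1) / (2 * Real.cos x - 1)| ^ ((2:ℝ)/3) ≤
        (18 * (N:ℝ) / d k) ^ ((2:ℝ)/3) :=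
      Real.rpow_le_rpow (abs_nonneg _) hratio (by norm_num)
    refine hstep.trans ?_
    have hdR1 : (1:ℝ) ≤ (d k : ℝ) := by exact_mod_cast hd1 k
    rw [Real.div_rpow (by positivity) (by positivity)]
    rw [hCdef]
    by_cases hkq : k = q
    · subst hkq
      rw [hwdef]
      simp only [if_pos rfl, hdq]
      norm_num
    · rw [hwdef]
      simp only [if_neg hkq]
      have hd3 : ((3:ℝ) * ((((k:ℤ) - q).natAbs : ℕ) : ℝ)) ≤ (d k : ℝ) := by
        have := hdk k hkq
        push_cast
        exact_mod_cast this
      have hna1 : (1:ℕ) ≤ ((k:ℤ) - q).natAbs := by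
        have : ¬ ((k:ℤ) = q) := by exact_mod_cast fun h => hkq (by exact_mod_cast h)
        omega
      have h3pos : (0:ℝ) < (3:ℝ) * ((((k:ℤ) - q).natAbs : ℕ) : ℝ) := by
        have : (1:ℝ) ≤ ((((k:ℤ) - q).natAbs : ℕ) : ℝ) := by exact_mod_cast hna1
        positivity
      have hmono : (d k : ℝ) ^ (-(2:ℝ)/3) ≤ ((3:ℝ) * ((((k:ℤ) - q).natAbs : ℕ) : ℝ)) ^ (-(2:ℝ)/3) :=
        Real.rpow_le_rpow_of_nonpos h3pos hd3 (by norm_num)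
      have hinv : (d k : ℝ) ^ ((2:ℝ)/3) = ((d k : ℝ) ^ (-(2:ℝ)/3))⁻¹ := by
        rw [← Real.rpow_neg (by positivity)]; norm_num
      calc ((18:ℝ) * N) ^ ((2:ℝ)/3) / (d k : ℝ) ^ ((2:ℝ)/3)
          = ((18:ℝ) * N) ^ ((2:ℝ)/3) * (d k : ℝ) ^ (-(2:ℝ)/3) := by
            rw [div_eq_mul_inv, hinv, inv_inv]
      _ ≤ ((18:ℝ) * N) ^ ((2:ℝ)/3) * ((3:ℝ) * ((((k:ℤ) - q).natAbs : ℕ) : ℝ)) ^ (-(2:ℝ)/3) := by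
            apply mul_le_mul_of_nonneg_left hmono (Real.rpow_nonneg (by positivity) _)
  -- bound the sum of w
  have hf0 : ∀ j, 0 ≤ f j := fun j => Real.rpow_nonneg (by positivity) _
  have hwsum : ∑ k ∈ Finset.range N, w k ≤ 1 + 2 * ∑ j ∈ Finset.range N, f j := by
    rw [← Finset.sum_range_add_sum_Ico w hqN, Finset.sum_range_succ]
    have hA : ∑ k ∈ Finset.range q, w k ≤ ∑ j ∈ Finset.range N, f j := by
      have e1 : ∑ k ∈ Finset.range q, w k = ∑ k ∈ Finset.range q, f (q - 1 - k) := by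
        apply Finset.sum_congr rfl
        intro k hk
        rw [Finset.mem_range] at hk
        rw [hwdef, hfdef]
        simp only [if_neg (by omega : ¬ k = q)]
        congr 2
        have h1 : ((k:ℤ) - q).natAbs = q - k := by omega
        rw [h1]
        have h2 : (q - k : ℕ) = (q - 1 - k) + 1 := by omega
        rw [h2]
        push_cast
        ring
      rw [e1, Finset.sum_range_reflect (fun j => f j) q]
      exact Finset.sum_le_sum_of_subset_of_nonneg
        (Finset.range_subset_range.2 (by omega)) (fun j _ _ => hf0 j)
    have hB : ∑ k ∈ Finset.Ico (q+1) N, w k ≤ ∑ j ∈ Finset.range N, f j := by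
      rw [Finset.sum_Ico_eq_sum_range]
      have e2 : ∑ i ∈ Finset.range (N - (q+1)), w (q + 1 + i)
          = ∑ i ∈ Finset.range (N - (q+1)), f i := by
        apply Finset.sum_congr rfl
        intro i _
        rw [hwdef, hfdef]
        simp only [if_neg (by omega : ¬ q + 1 + i = q)]
        congr 2
        have h1 : (((q + 1 + i : ℕ):ℤ) - q).natAbs = i + 1 := by push_cast; omega
        rw [h1]
        push_cast
        ring
      rw [e2]
      exact Finset.sum_le_sum_of_subset_of_nonneg
        (Finset.range_subset_range.2 (by omega)) (fun j _ _ => hf0 j)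
    have hwq : w q = 1 := by rw [hwdef]; simp
    linarith
  have hfsum : ∑ j ∈ Finset.range N, f j ≤ (3:ℝ) ^ ((1:ℝ)/3) * (N:ℝ) ^ ((1:ℝ)/3) := by
    have e3 : ∀ j : ℕ, f j = (3:ℝ) ^ (-(2:ℝ)/3) * ((j:ℝ)+1) ^ (-(2:ℝ)/3) := by
      intro j
      rw [hfdef]
      exact Real.mul_rpow (by norm_num) (by positivity)
    rw [Finset.sum_congr rfl (fun j _ => e3 j), ← Finset.mul_sum]
    have h33 : (3:ℝ) ^ (-(2:ℝ)/3) * 3 = (3:ℝ) ^ ((1:ℝ)/3) := by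
      have h' := Real.rpow_add (show (0:ℝ) < 3 by norm_num) (-(2:ℝ)/3) 1
      rw [Real.rpow_one] at h'
      rw [← h']
      norm_num
    calc (3:ℝ) ^ (-(2:ℝ)/3) * ∑ j ∈ Finset.range N, ((j:ℝ)+1) ^ (-(2:ℝ)/3)
        ≤ (3:ℝ) ^ (-(2:ℝ)/3) * (3 * (N:ℝ) ^ ((1:ℝ)/3)) := by
          apply mul_le_mul_of_nonneg_left (sum_rpow_le N) (Real.rpow_nonneg (by norm_num) _)
    _ = (3:ℝ) ^ ((1:ℝ)/3) * (N:ℝ) ^ ((1:ℝ)/3) := by rw [← mul_assoc, h33]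
  -- assemble
  have hsum : ∑ k ∈ Finset.range N,
      |(2 * Real.cos ((2 * k + 1) * π / 2 ^ (n + 1)) + 1) /
        (2 * Real.cos ((2 * k + 1) * π / 2 ^ (n + 1)) - 1)| ^ ((2 : ℝ) / 3)
      ≤ C * (1 + 2 * ((3:ℝ) ^ ((1:ℝ)/3) * (N:ℝ) ^ ((1:ℝ)/3))) := by
    calc _ ≤ ∑ k ∈ Finset.range N, C * w k := Finset.sum_le_sum hterm
    _ = C * ∑ k ∈ Finset.range N, w k := by rw [Finset.mul_sum]
    _ ≤ C * (1 + 2 * ∑ j ∈ Finset.range N, f j) := mul_le_mul_of_nonneg_left hwsum hC0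
    _ ≤ _ := by
        apply mul_le_mul_of_nonneg_left _ hC0
        linarith
  -- final numerics
  have hCsplit : C = (18:ℝ) ^ ((2:ℝ)/3) * (N:ℝ) ^ ((2:ℝ)/3) := by
    rw [hCdef]; exact Real.mul_rpow (by norm_num) hNR0.le
  have hu1 : (N:ℝ) ^ ((2:ℝ)/3) ≤ (N:ℝ) := by
    calc (N:ℝ) ^ ((2:ℝ)/3) ≤ (N:ℝ) ^ (1:ℝ) :=
      Real.rpow_le_rpow_of_exponent_le (by exact_mod_cast hN1) (by norm_num)
    _ = N := Real.rpow_one _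
  have hu2 : (N:ℝ) ^ ((2:ℝ)/3) * (N:ℝ) ^ ((1:ℝ)/3) = (N:ℝ) := by
    rw [← Real.rpow_add hNR0]; norm_num
  have ha := rpow_18
  have hab := rpow_972
  have ha0 : (0:ℝ) ≤ (18:ℝ) ^ ((2:ℝ)/3) := Real.rpow_nonneg (by norm_num) _
  have hb0 : (0:ℝ) ≤ (3:ℝ) ^ ((1:ℝ)/3) := Real.rpow_nonneg (by norm_num) _
  have hu0 : (0:ℝ) ≤ (N:ℝ) ^ ((2:ℝ)/3) := Real.rpow_nonneg hNR0.le _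
  have hv0 : (0:ℝ) ≤ (N:ℝ) ^ ((1:ℝ)/3) := Real.rpow_nonneg hNR0.le _
  have hfinal : C * (1 + 2 * ((3:ℝ) ^ ((1:ℝ)/3) * (N:ℝ) ^ ((1:ℝ)/3))) < (N:ℝ) * 33 := by
    rw [hCsplit]
    have expand : (18:ℝ) ^ ((2:ℝ)/3) * (N:ℝ) ^ ((2:ℝ)/3) *
        (1 + 2 * ((3:ℝ) ^ ((1:ℝ)/3) * (N:ℝ) ^ ((1:ℝ)/3)))
        = (18:ℝ) ^ ((2:ℝ)/3) * (N:ℝ) ^ ((2:ℝ)/3)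
          + 2 * ((18:ℝ) ^ ((2:ℝ)/3) * (3:ℝ) ^ ((1:ℝ)/3)) * ((N:ℝ) ^ ((2:ℝ)/3) * (N:ℝ) ^ ((1:ℝ)/3)) := by
      ring
    rw [expand, hu2]
    nlinarith [mul_le_mul_of_nonneg_right hab hNR0.le, mul_le_mul ha hu1 hu0 (by norm_num : (0:ℝ) ≤ 7)]
  have hNcast : ((N:ℝ)) = 2 ^ (n - 1) := by rw [hNdef]; push_cast; ring
  calc _ ≤ C * (1 + 2 * ((3:ℝ) ^ ((1:ℝ)/3) * (N:ℝ) ^ ((1:ℝ)/3))) := hsum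
  _ < (N:ℝ) * 33 := hfinal
  _ = 2 ^ (n - 1) * 33 := by rw [hNcast]
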